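/- In continuous-time masked diffusion, simultaneous unmasking events have vanishing probability: the probability under the reverse posterior that two or more dimensions are unmasked in a single step from time t to s = t - 1/T is O(1/T²); formally, Σ_{w^s : |M_{w^t}| - |M_{w^s}| ≥ 2} q(w^s | w^t, w^0) ≤ C/T² for some constant C depending on α, t, and W but not T (for T large enough), where α is continuously differentiable. -/

import Mathlib

open Classical in
/-- In continuous-time masked diffusion, simultaneous unmasking events have vanishing
probability: the total reverse-posterior probability of unmasking two or more dimensions in a
single step from time `t` to `s = t - 1/T` is `O(1/T²)`, with a constant depending on `α`, `t`
and `W` but not on `T`. -/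
theorem simultaneous_unmasking_vanishes
    (W V : ℕ) (α : ℝ → ℝ) (t : ℝ)
    (hC1 : ContDiff ℝ 1 α) (hanti : StrictAntiOn α (Set.Icc 0 1))
    (ht : t ∈ Set.Ioo (0:ℝ) 1) (hαt0 : 0 < α t) (hαt1 : α t < 1)
    (wt : Fin W → Option (Fin V)) (w0 : Fin W → Fin V)
    (hext : ∀ i (v : Fin V), wt i = some v → w0 i = v) :
    ∃ C : ℝ, ∃ T0 : ℕ, ∀ T : ℕ, T0 ≤ T →
      (∑ ws : Fin W → Option (Fin V),
        if ((∀ i (v : Fin V), wt i = some v → ws i = some v) ∧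
            (∀ i (v : Fin V), ws i = some v → w0 i = v) ∧
            2 ≤ (Finset.univ.filter fun i => wt i = none).card
                  - (Finset.univ.filter fun i => ws i = none).card)
        then
          ((1 - α (t - 1/(T:ℝ))) / (1 - α t)) ^
              (Finset.univ.filter fun i => ws i = none).card *
            ((α (t - 1/(T:ℝ)) - α t) / (1 - α t)) ^
              ((Finset.univ.filter fun i => wt i = none).card
                - (Finset.univ.filter fun i => ws i = none).card)
        else 0)
      ≤ C / (T:ℝ)^2 := by
  have hd : (0:ℝ) < 1 - α t := by linarith
  -- Lipschitz bound on α over [0,1]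
  have hderiv : ContinuousOn (deriv α) (Set.Icc (0:ℝ) 1) :=
    (hC1.continuous_deriv le_rfl).continuousOn
  obtain ⟨L, hL⟩ := (isCompact_Icc : IsCompact (Set.Icc (0:ℝ) 1)).exists_bound_of_continuousOn hderiv
  have hL0 : 0 ≤ L := le_trans (norm_nonneg _) (hL 0 (by norm_num))
  set K : ℝ := L / (1 - α t) with hK
  have hK0 : 0 ≤ K := div_nonneg hL0 hd.le
  refine ⟨(Fintype.card (Fin W → Option (Fin V)) : ℝ) * K ^ 2,
    max (⌈1/t⌉₊ + 1) (⌈K⌉₊ + 1), fun T hT => ?_⟩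
  have hT1 : 1 ≤ T := le_trans (le_trans (Nat.le_add_left 1 _) (le_max_left _ _)) hT
  have hTpos : (0:ℝ) < T := by exact_mod_cast hT1
  have hKT : K ≤ (T:ℝ) := by
    have h1 : K ≤ (⌈K⌉₊ : ℝ) := Nat.le_ceil K
    have h2 : (⌈K⌉₊ + 1 : ℕ) ≤ T := le_trans (le_max_right _ _) hT
    have : ((⌈K⌉₊ : ℝ)) ≤ (T:ℝ) := by exact_mod_cast le_trans (Nat.le_succ _) h2
    linarith
  have hsT : (1:ℝ)/t < T := by
    have h1 : (1/t : ℝ) ≤ (⌈1/t⌉₊ : ℝ) := Nat.le_ceil _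
    have h2 : (⌈1/t⌉₊ + 1 : ℕ) ≤ T := le_trans (le_max_left _ _) hT
    have : ((⌈1/t⌉₊ : ℝ)) + 1 ≤ (T:ℝ) := by exact_mod_cast h2
    linarith
  set s : ℝ := t - 1/(T:ℝ) with hs
  have hinvT : 1/(T:ℝ) ≤ t := by
    rw [div_le_iff₀ hTpos]
    have ht0 := ht.1
    calc (1:ℝ) = t * (1/t) := by field_simp
      _ ≤ t * T := by nlinarith [one_div_pos.mpr ht0]
  have hs0 : 0 ≤ s := by rw [hs]; linarith
  have hst : s < t := by
    have h0 : (0:ℝ) < 1/(T:ℝ) := by positivity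
    rw [hs]; linarith
  have hsmem : s ∈ Set.Icc (0:ℝ) 1 := ⟨hs0, by linarith [ht.2]⟩
  have htmem : t ∈ Set.Icc (0:ℝ) 1 := ⟨ht.1.le, ht.2.le⟩
  have hαst : α t < α s := hanti hsmem htmem hst
  -- Lipschitz estimate
  have hlip : α s - α t ≤ L / T := by
    have := Convex.norm_image_sub_le_of_norm_deriv_le
      (fun x _ => (hC1.differentiable one_ne_zero).differentiableAt)
      hL (convex_Icc 0 1) htmem hsmem
    have habs : |α s - α t| ≤ L * |s - t| := by
      simpa [Real.norm_eq_abs] using this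
    have hst' : |s - t| = 1/(T:ℝ) := by
      rw [abs_of_nonpos (by linarith)]; simp [hs]
    rw [hst'] at habs
    calc α s - α t ≤ |α s - α t| := le_abs_self _
      _ ≤ L * (1/T) := habs
      _ = L / T := by ring
  set b : ℝ := (α s - α t) / (1 - α t) with hb
  have hb0 : 0 ≤ b := div_nonneg (by linarith) hd.le
  have hbKT : b ≤ K / T := by
    have hKTeq : K / (T:ℝ) = (L / T) / (1 - α t) := by
      rw [hK, div_div, div_div, mul_comm]
    rw [hb, hKTeq]
    gcongr
  have hKT1 : K / (T:ℝ) ≤ 1 := (div_le_one hTpos).mpr hKT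
  have hb1 : b ≤ 1 := le_trans hbKT hKT1
  set a : ℝ := (1 - α s) / (1 - α t) with ha
  have ha1 : a ≤ 1 := by
    rw [ha, div_le_one hd]; linarith
  have ha0 : 0 ≤ a := by
    rw [ha]
    apply div_nonneg _ hd.le
    have hLT : L / (T:ℝ) ≤ 1 - α t := by
      rw [div_le_iff₀ hTpos]
      calc L = K * (1 - α t) := by rw [hK]; field_simp
        _ ≤ (T:ℝ) * (1 - α t) := mul_le_mul_of_nonneg_right hKT hd.le
        _ = (1 - α t) * T := mul_comm _ _
    linarith
  -- bound each term
  have hterm : ∀ ws : Fin W → Option (Fin V),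
      (if ((∀ i (v : Fin V), wt i = some v → ws i = some v) ∧
            (∀ i (v : Fin V), ws i = some v → w0 i = v) ∧
            2 ≤ (Finset.univ.filter fun i => wt i = none).card
                  - (Finset.univ.filter fun i => ws i = none).card)
        then a ^ (Finset.univ.filter fun i => ws i = none).card *
            b ^ ((Finset.univ.filter fun i => wt i = none).card
                - (Finset.univ.filter fun i => ws i = none).card)
        else 0) ≤ K ^ 2 / T ^ 2 := by
    intro ws
    split
    · rename_i h
      obtain ⟨-, -, hk⟩ := h
      set k := (Finset.univ.filter fun i => wt i = none).card
                  - (Finset.univ.filter fun i => ws i = none).card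
      calc a ^ _ * b ^ k ≤ 1 * b ^ k := by
            apply mul_le_mul_of_nonneg_right (pow_le_one₀ ha0 ha1) (pow_nonneg hb0 _)
        _ = b ^ k := one_mul _
        _ ≤ b ^ 2 := pow_le_pow_of_le_one hb0 hb1 hk
        _ ≤ (K/T) ^ 2 := pow_le_pow_left₀ hb0 hbKT 2
        _ = K ^ 2 / T ^ 2 := div_pow K T 2
    · positivity
  calc (∑ ws : Fin W → Option (Fin V), _) ≤
      ∑ _ws : Fin W → Option (Fin V), K ^ 2 / (T:ℝ) ^ 2 :=
        Finset.sum_le_sum fun ws _ => hterm ws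
    _ = (Fintype.card (Fin W → Option (Fin V)) : ℝ) * (K ^ 2 / T ^ 2) := by
        rw [Finset.sum_const, Finset.card_univ, nsmul_eq_mul]
    _ = (Fintype.card (Fin W → Option (Fin V)) : ℝ) * K ^ 2 / (T:ℝ)^2 := by ring
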